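/- There exists a constant C > 1 such that for all sufficiently large n and all integers ℓ, ℓ' ≥ 1 with n - ℓ + ℓ' even and max{ℓ, ℓ'} ≤ n^{1/4}, the gambler's ruin transition probability p^{(n)}_{ℓℓ'} = 2^{-n}(C(n,(n-ℓ+ℓ')/2) - C(n,(n-ℓ-ℓ')/2)) satisfies C^{-1} n^{-3/2} ℓ ℓ' ≤ p^{(n)}_{ℓℓ'} ≤ C n^{-3/2} ℓ ℓ'. -/

import Mathlib

open Finset Filter Real

section GRaux

/-- Step identity. -/
private lemma step_id (n k : ℕ) :
    ((n : ℝ) + 1) * ((n.choose (k+1) : ℝ) - (n.choose k : ℝ))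
      = ((n+1).choose (k+1) : ℝ) * ((n : ℝ) - 2 * k - 1) := by
  rcases le_or_gt k n with hk | hk
  · have h1 : ((n.choose (k+1) : ℝ)) * (k+1) = (n.choose k : ℝ) * ((n : ℝ) - k) := by
      have h := congrArg (fun x : ℕ => (x : ℝ)) (Nat.choose_succ_right_eq n k)
      push_cast [Nat.cast_sub hk] at h
      linarith [h]
    have h2 : ((n : ℝ) + 1) * (n.choose k : ℝ) = ((n+1).choose (k+1) : ℝ) * (k+1) := by
      have := Nat.add_one_mul_choose_eq n k
      exact_mod_cast congrArg (Nat.cast (R := ℝ)) this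
    have hk1 : ((k : ℝ) + 1) ≠ 0 := by positivity
    apply mul_left_cancel₀ hk1
    linear_combination ((n:ℝ)+1)*h1 + ((n:ℝ)-2*k-1)*h2
  · have e1 : n.choose (k+1) = 0 := Nat.choose_eq_zero_of_lt (by omega)
    have e2 : n.choose k = 0 := Nat.choose_eq_zero_of_lt hk
    have e3 : (n+1).choose (k+1) = 0 := Nat.choose_eq_zero_of_lt (by omega)
    simp [e1, e2, e3]

/-- Telescope. -/
private lemma telescope (n a b : ℕ) (h : b ≤ a) :
    (n.choose a : ℝ) - (n.choose b : ℝ)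
      = ∑ k ∈ Ico b a, ((n.choose (k+1) : ℝ) - (n.choose k : ℝ)) := by
  rw [Finset.sum_Ico_eq_sub _ h, Finset.sum_range_sub (fun i => (n.choose i : ℝ)),
    Finset.sum_range_sub (fun i => (n.choose i : ℝ))]
  ring

/-- Coefficient sum. -/
private lemma coeff_sum (n b : ℕ) : ∀ m, b ≤ m →
    ∑ k ∈ Ico b m, ((n : ℝ) - 2 * k - 1) = ((m : ℝ) - b) * ((n : ℝ) - m - b) := by
  intro m
  induction m with
  | zero => intro h; interval_cases b; simp
  | succ m ih =>
    intro h
    rcases Nat.lt_or_ge b (m+1) with h' | h'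
    · have hbm : b ≤ m := by omega
      rw [Finset.sum_Ico_succ_top hbm, ih hbm]
      push_cast
      ring
    · have : b = m + 1 := by omega
      subst this
      simp

/-- Reflection: sum over the symmetric interval vanishes. -/
private lemma reflect_zero (n a : ℕ) (ha : a ≤ n) :
    ∑ k ∈ Ico (n - a) a, (((n+1).choose (k+1) : ℝ) * ((n : ℝ) - 2 * k - 1)) = 0 := by
  apply Finset.sum_involution (g := fun k _ => n - 1 - k)
  · intro k hk
    simp only [Finset.mem_Ico] at hk
    have hk1 : k ≤ n - 1 := by omega
    have hsym : (n+1).choose (n - 1 - k + 1) = (n+1).choose (k+1) := by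
      have : n - 1 - k + 1 = (n+1) - (k+1) := by omega
      rw [this, Nat.choose_symm (by omega)]
    rw [hsym]
    have hc : ((n - 1 - k : ℕ) : ℝ) = (n : ℝ) - 1 - k := by
      push_cast [Nat.cast_sub (show k ≤ n - 1 by omega), Nat.cast_sub (show 1 ≤ n by omega)]
      ring
    rw [hc]
    ring
  · intro k hk h
    simp only [Finset.mem_Ico] at hk
    intro hek
    apply h
    have : (n : ℝ) - 2 * k - 1 = 0 := by
      have h0 : n - 1 - k = k := hek
      have h2 : n = 2 * k + 1 := by omega
      have h3 : (n : ℝ) = 2 * k + 1 := by exact_mod_cast congrArg (fun x : ℕ => (x:ℝ)) h2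
      linarith
    rw [this, mul_zero]
  · intro k hk
    simp only [Finset.mem_Ico] at hk ⊢
    omega
  · intro k hk
    simp only [Finset.mem_Ico] at hk
    omega

/-- Ratio lemma in ℕ: going down `i` steps from the middle loses at most a factor `(y/x)^i`. -/
private lemma ratio_step (N M d : ℕ) (hM : M = N / 2) (hd : d ≤ M) :
    ∀ i, i ≤ d →
      N.choose M * (M - d + 1) ^ i ≤ N.choose (M - i) * (N - M + d) ^ i := by
  intro i
  induction i with
  | zero => simp
  | succ i ih =>
    intro hi
    have hii : i ≤ d := by omega
    have h1 := ih hii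
    have hMi : 1 ≤ M - i := by omega
    have hkey : N.choose (M - i) * (M - i) = N.choose (M - i - 1) * (N - M + i + 1) := by
      have h := Nat.choose_succ_right_eq N (M - i - 1)
      have e1 : M - i - 1 + 1 = M - i := by omega
      have e2 : N - (M - i - 1) = N - M + i + 1 := by
        have hMN : M ≤ N := by omega
        omega
      rw [e1, e2] at h
      exact h
    have hpos : 0 < M - i := hMi
    refine Nat.le_of_mul_le_mul_left ?_ hpos
    calc (M - i) * (N.choose M * (M - d + 1) ^ (i+1))
        = (N.choose M * (M - d + 1) ^ i) * ((M - i) * (M - d + 1)) := by ring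
      _ ≤ (N.choose (M - i) * (N - M + d) ^ i) * ((M - i) * (M - d + 1)) :=
          Nat.mul_le_mul_right _ h1
      _ = (N.choose (M - i) * (M - i)) * ((M - d + 1) * (N - M + d) ^ i) := by ring
      _ = (N.choose (M - i - 1) * (N - M + i + 1)) * ((M - d + 1) * (N - M + d) ^ i) := by
          rw [hkey]
      _ ≤ (N.choose (M - i - 1) * (N - M + d)) * ((M - i) * (N - M + d) ^ i) := by
          apply Nat.mul_le_mul
          · exact Nat.mul_le_mul_left _ (by omega)
          · exact Nat.mul_le_mul_right _ (by omega)
      _ = (M - i) * (N.choose (M - (i+1)) * (N - M + d) ^ (i+1)) := by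
          have : M - (i+1) = M - i - 1 := by omega
          rw [this]; ring

private lemma pow_le_two_pow (x y : ℕ) (d i : ℕ) (hi : i ≤ d) (hx1 : 1 ≤ x)
    (hyx : y ≤ x + 2*d) (hy8 : 8*(d+1)^2 ≤ y) :
    ((y:ℝ))^i ≤ 2 * ((x:ℝ))^i := by
  have hx0 : (0:ℝ) < x := by exact_mod_cast hx1
  rcases le_or_gt (y:ℝ) (x:ℝ) with h | h
  · have : (y:ℝ)^i ≤ (x:ℝ)^i := pow_le_pow_left₀ (by positivity) h i
    nlinarith [pow_pos hx0 i]
  · have hy0 : (0:ℝ) < y := lt_trans hx0 h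
    set ρ : ℝ := (x:ℝ)/(y:ℝ) with hρ
    have hρ0 : 0 < ρ := by positivity
    have hρ1 : ρ ≤ 1 := by rw [hρ, div_le_one hy0]; linarith
    have hber : 1 + (d:ℝ) * (ρ - 1) ≤ ρ^d := by
      have := one_add_mul_le_pow (a := ρ - 1) (by linarith) d
      simpa using this
    have hdy : (d:ℝ) * ((y:ℝ) - x) ≤ (1/2) * y := by
      have h1 : (y:ℝ) - x ≤ 2*d := by
        have : (y:ℝ) ≤ x + 2*d := by exact_mod_cast hyx
        linarith
      have h2 : (8:ℝ)*((d:ℝ)+1)^2 ≤ y := by exact_mod_cast hy8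
      nlinarith [Nat.cast_nonneg (α := ℝ) d]
    have hhalf : (1/2 : ℝ) ≤ ρ^d := by
      have he : (d:ℝ) * (ρ - 1) = -(d * ((y:ℝ) - x) / y) := by
        rw [hρ]; field_simp; ring
      rw [he] at hber
      have : (d:ℝ) * ((y:ℝ) - x) / y ≤ 1/2 := by
        rw [div_le_iff₀ hy0]; linarith
      linarith
    have hmono : ρ^d ≤ ρ^i := pow_le_pow_of_le_one hρ0.le hρ1 hi
    have hρi : (1/2 : ℝ) ≤ ρ^i := le_trans hhalf hmono
    have hxy : (ρ * y)^i = (x:ℝ)^i := by rw [hρ, div_mul_cancel₀ _ (ne_of_gt hy0)]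
    have hexp : ρ^i * (y:ℝ)^i = (x:ℝ)^i := by rw [← mul_pow]; exact hxy
    nlinarith [pow_pos (show (0:ℝ) < (y:ℝ) from hy0) i]

private lemma choose_ge_half (N M d : ℕ) (hM : M = N/2) (hd : d ≤ M) (hdN : 16*(d+1)^2 ≤ N)
    (j : ℕ) (hj1 : M - d ≤ j) (hj2 : j ≤ M) :
    (N.choose M : ℝ) ≤ 2 * (N.choose j : ℝ) := by
  set i := M - j with hi
  have hii : i ≤ d := by omega
  have hMi : M - i = j := by omega
  have hr := ratio_step N M d hM hd i hii
  rw [hMi] at hr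
  have hr' : (N.choose M : ℝ) * ((M - d + 1 : ℕ):ℝ)^i ≤ (N.choose j : ℝ) * ((N - M + d : ℕ):ℝ)^i := by
    exact_mod_cast hr
  have hx1 : 1 ≤ M - d + 1 := by omega
  have hyx : N - M + d ≤ (M - d + 1) + 2*d := by omega
  have hy8 : 8*(d+1)^2 ≤ N - M + d := by
    obtain ⟨q, hq⟩ : ∃ q, (d+1)^2 = q := ⟨_, rfl⟩
    rw [hq] at hdN ⊢
    omega
  have hple := pow_le_two_pow (M - d + 1) (N - M + d) d i hii hx1 hyx hy8
  have hxpos : (0:ℝ) < ((M - d + 1 : ℕ):ℝ)^i := by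
    have : (0:ℝ) < ((M - d + 1 : ℕ):ℝ) := by exact_mod_cast hx1
    positivity
  have hcj : (0:ℝ) ≤ (N.choose j : ℝ) := by positivity
  have hfin : (N.choose M : ℝ) * ((M - d + 1 : ℕ):ℝ)^i
      ≤ (2 * (N.choose j : ℝ)) * ((M - d + 1 : ℕ):ℝ)^i := by
    calc (N.choose M : ℝ) * ((M - d + 1 : ℕ):ℝ)^i
        ≤ (N.choose j : ℝ) * ((N - M + d : ℕ):ℝ)^i := hr'
      _ ≤ (N.choose j : ℝ) * (2 * ((M - d + 1 : ℕ):ℝ)^i) := by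
          apply mul_le_mul_of_nonneg_left hple hcj
      _ = (2 * (N.choose j : ℝ)) * ((M - d + 1 : ℕ):ℝ)^i := by ring
  exact le_of_mul_le_mul_right hfin hxpos

private lemma cb_key (t : ℕ) (ht : 1 ≤ t) :
    (Nat.centralBinom t : ℝ) * Real.sqrt t * (Stirling.stirlingSeq t)^2
      = Stirling.stirlingSeq (2*t) * 4^t := by
  have ht0 : (0:ℝ) < t := by exact_mod_cast ht
  set P : ℝ := ((t:ℝ)/Real.exp 1)^t with hPdef
  have hP : (0:ℝ) < P := by positivity
  have hst : (0:ℝ) < Real.sqrt t := Real.sqrt_pos.mpr ht0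
  have h2 : Real.sqrt 2 * Real.sqrt 2 = 2 := Real.mul_self_sqrt (by norm_num)
  have htt : Real.sqrt t * Real.sqrt t = (t:ℝ) := Real.mul_self_sqrt ht0.le
  have hs2t : Real.sqrt (2*(t:ℝ)) = Real.sqrt 2 * Real.sqrt t := Real.sqrt_mul (by norm_num) _
  have hs4t : Real.sqrt (2*(2*(t:ℝ))) = 2 * Real.sqrt t := by
    rw [show 2*(2*(t:ℝ)) = 4*t by ring, Real.sqrt_mul (by norm_num) t,
      show (4:ℝ) = 2^2 by norm_num, Real.sqrt_sq (by norm_num)]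
  have hD1 : Real.sqrt (2*(t:ℝ)) * ((t:ℝ)/Real.exp 1)^t ≠ 0 := by
    apply mul_ne_zero (ne_of_gt (Real.sqrt_pos.mpr (by positivity)))
    exact pow_ne_zero _ (by positivity)
  have e1 : (t.factorial : ℝ) = Stirling.stirlingSeq t * (Real.sqrt (2*(t:ℝ)) * ((t:ℝ)/Real.exp 1)^t) := by
    rw [Stirling.stirlingSeq]
    exact (div_mul_cancel₀ _ hD1).symm
  have hc2t : ((2*t:ℕ):ℝ) = 2*(t:ℝ) := by push_cast; ring
  have hD2 : Real.sqrt (2*((2*t:ℕ):ℝ)) * (((2*t:ℕ):ℝ)/Real.exp 1)^(2*t) ≠ 0 := by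
    rw [hc2t]
    apply mul_ne_zero (ne_of_gt (Real.sqrt_pos.mpr (by positivity)))
    exact pow_ne_zero _ (by positivity)
  have e2 : ((2*t).factorial : ℝ)
      = Stirling.stirlingSeq (2*t) * (Real.sqrt (2*((2*t:ℕ):ℝ)) * (((2*t:ℕ):ℝ)/Real.exp 1)^(2*t)) := by
    rw [Stirling.stirlingSeq]
    exact (div_mul_cancel₀ _ hD2).symm
  have hQ : (((2*t:ℕ):ℝ)/Real.exp 1)^(2*t) = 4^t * P^2 := by
    rw [hc2t, show (2*(t:ℝ))/Real.exp 1 = 2*((t:ℝ)/Real.exp 1) by ring, mul_pow,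
      show ((2:ℝ))^(2*t) = 4^t by rw [pow_mul]; norm_num, hPdef, mul_comm 2 t, pow_mul]
  have hcbn : (Nat.centralBinom t) * t.factorial * t.factorial = (2*t).factorial := by
    rw [Nat.centralBinom_eq_two_mul_choose]
    have h := Nat.choose_mul_factorial_mul_factorial (show t ≤ 2*t by omega)
    rwa [show 2*t - t = t by omega] at h
  have hcb : (Nat.centralBinom t : ℝ) * ((t.factorial:ℝ) * (t.factorial:ℝ)) = ((2*t).factorial : ℝ) := by
    exact_mod_cast congrArg (fun x : ℕ => (x:ℝ)) (by rw [← hcbn]; ring)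
  rw [e1, e2, hQ, hs2t, hc2t, hs4t, ← hPdef] at hcb
  have hexp : (Nat.centralBinom t : ℝ)
      * ((Stirling.stirlingSeq t * (Real.sqrt 2 * Real.sqrt t * P))
        * (Stirling.stirlingSeq t * (Real.sqrt 2 * Real.sqrt t * P)))
      = ((Nat.centralBinom t : ℝ) * Real.sqrt t * (Stirling.stirlingSeq t)^2)
        * (Real.sqrt 2 * Real.sqrt 2) * Real.sqrt t * P^2 := by ring
  rw [hexp, h2] at hcb
  have hfin : ((Nat.centralBinom t : ℝ) * Real.sqrt t * (Stirling.stirlingSeq t)^2)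
      * (2 * Real.sqrt t * P^2)
      = (Stirling.stirlingSeq (2*t) * 4^t) * (2 * Real.sqrt t * P^2) := by
    linear_combination hcb
  exact mul_right_cancel₀ (by positivity) hfin

private lemma cb_bounds : ∃ c1 c2 : ℝ, 0 < c1 ∧ 0 < c2 ∧ ∃ T : ℕ, 1 ≤ T ∧ ∀ t : ℕ, T ≤ t →
    c1 * 4^t ≤ (Nat.centralBinom t : ℝ) * Real.sqrt t
    ∧ (Nat.centralBinom t : ℝ) * Real.sqrt t ≤ c2 * 4^t := by
  have hπ : (0:ℝ) < Real.sqrt π := Real.sqrt_pos.mpr Real.pi_pos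
  set l : ℝ := Real.sqrt π / 2 with hl
  set u : ℝ := 2 * Real.sqrt π with hu
  have hl0 : 0 < l := by positivity
  have hu0 : 0 < u := by positivity
  have h := Stirling.tendsto_stirlingSeq_sqrt_pi
  have h1 : ∀ᶠ m in atTop, l < Stirling.stirlingSeq m :=
    h.eventually (eventually_gt_nhds (by rw [hl]; linarith))
  have h2 : ∀ᶠ m in atTop, Stirling.stirlingSeq m < u :=
    h.eventually (eventually_lt_nhds (by rw [hu]; linarith))
  obtain ⟨T, hT⟩ := (h1.and h2).exists_forall_of_atTop
  refine ⟨l/u^2, u/l^2, by positivity, by positivity, max T 1, le_max_right _ _, ?_⟩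
  intro t ht
  have ht1 : 1 ≤ t := le_trans (le_max_right _ _) ht
  have hTt : T ≤ t := le_trans (le_max_left _ _) ht
  have hs1 := hT t hTt
  have hs2 := hT (2*t) (by omega)
  have hkey := cb_key t ht1
  have h4 : (0:ℝ) < 4^t := by positivity
  have hcb0 : (0:ℝ) ≤ (Nat.centralBinom t : ℝ) * Real.sqrt t := by positivity
  have hs1sq : (Stirling.stirlingSeq t)^2 ≤ u^2 := by nlinarith [hs1.1, hs1.2]
  have hs1sq' : l^2 ≤ (Stirling.stirlingSeq t)^2 := by nlinarith [hs1.1, hs1.2]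
  constructor
  · rw [div_mul_eq_mul_div, div_le_iff₀ (by positivity : (0:ℝ) < u^2)]
    calc l * 4^t ≤ Stirling.stirlingSeq (2*t) * 4^t := by nlinarith [hs2.1]
      _ = (Nat.centralBinom t : ℝ) * Real.sqrt t * (Stirling.stirlingSeq t)^2 := hkey.symm
      _ ≤ (Nat.centralBinom t : ℝ) * Real.sqrt t * u^2 :=
          mul_le_mul_of_nonneg_left hs1sq hcb0
  · rw [div_mul_eq_mul_div, le_div_iff₀ (by positivity : (0:ℝ) < l^2)]
    calc (Nat.centralBinom t : ℝ) * Real.sqrt t * l^2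
        ≤ (Nat.centralBinom t : ℝ) * Real.sqrt t * (Stirling.stirlingSeq t)^2 :=
          mul_le_mul_of_nonneg_left hs1sq' hcb0
      _ = Stirling.stirlingSeq (2*t) * 4^t := hkey
      _ ≤ u * 4^t := by nlinarith [hs2.2]

private lemma middle_bounds : ∃ c3 c4 : ℝ, 0 < c3 ∧ 0 < c4 ∧ ∃ N6 : ℕ, ∀ m : ℕ, N6 ≤ m →
    c3 * 2^m ≤ (m.choose (m/2) : ℝ) * Real.sqrt m
    ∧ (m.choose (m/2) : ℝ) * Real.sqrt m ≤ c4 * 2^m := by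
  obtain ⟨c1, c2, hc1, hc2, T, hT1, hT⟩ := cb_bounds
  have sqrt2_le : Real.sqrt 2 ≤ 2 := by
    nlinarith [Real.sq_sqrt (show (0:ℝ) ≤ 2 by norm_num), Real.sqrt_nonneg 2]
  have one_le_sqrt2 : 1 ≤ Real.sqrt 2 := by
    nlinarith [Real.sq_sqrt (show (0:ℝ) ≤ 2 by norm_num), Real.sqrt_nonneg 2]
  refine ⟨c1/2, 2*c2, by positivity, by positivity, 2*T+2, ?_⟩
  intro m hm
  rcases Nat.even_or_odd m with ⟨r, rfl⟩ | ⟨r, rfl⟩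
  · have hr : T ≤ r := by omega
    have hdiv : (r + r)/2 = r := by omega
    have hcb : (r+r).choose ((r+r)/2) = Nat.centralBinom r := by
      rw [hdiv, Nat.centralBinom_eq_two_mul_choose, two_mul]
    rw [hcb]
    have hcast : ((r+r : ℕ):ℝ) = 2*(r:ℝ) := by push_cast; ring
    have hsq : Real.sqrt ((r+r:ℕ):ℝ) = Real.sqrt 2 * Real.sqrt r := by
      rw [hcast, Real.sqrt_mul (by norm_num)]
    have hpow : (2:ℝ)^(r+r) = 4^r := by
      rw [show r+r = 2*r by ring, pow_mul]; norm_num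
    have h := hT r hr
    have hnn : (0:ℝ) ≤ (Nat.centralBinom r : ℝ) * Real.sqrt r := by positivity
    rw [hsq, hpow]
    constructor
    · nlinarith [h.1]
    · nlinarith [h.2]
  · have hr : T ≤ r := by omega
    have hr1 : 1 ≤ r := by omega
    have hdiv : (2*r + 1)/2 = r := by omega
    rw [hdiv]
    obtain ⟨s, rfl⟩ : ∃ s, r = s + 1 := ⟨r - 1, by omega⟩
    set r := s + 1
    have hpascal : (2*r+1).choose r = (2*r).choose s + (2*r).choose r := by
      have := Nat.choose_succ_succ (2*r) s
      simpa using this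
    have hmid : (2*r).choose s ≤ (2*r).choose r := by
      have := Nat.choose_le_middle s (2*r)
      rwa [show (2*r)/2 = r by omega] at this
    have hX1 : Nat.centralBinom r ≤ (2*r+1).choose r := by
      rw [hpascal, Nat.centralBinom_eq_two_mul_choose]; omega
    have hX2 : (2*r+1).choose r ≤ 2 * Nat.centralBinom r := by
      rw [hpascal, Nat.centralBinom_eq_two_mul_choose]; omega
    have hX1' : (Nat.centralBinom r : ℝ) ≤ ((2*r+1).choose r : ℝ) := by exact_mod_cast hX1
    have hX2' : ((2*r+1).choose r : ℝ) ≤ 2 * (Nat.centralBinom r : ℝ) := by exact_mod_cast hX2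
    have hcast : ((2*r+1 : ℕ):ℝ) = 2*(r:ℝ)+1 := by push_cast; ring
    have hs_low : Real.sqrt r ≤ Real.sqrt ((2*r+1:ℕ):ℝ) := by
      apply Real.sqrt_le_sqrt; rw [hcast]; push_cast
      have : (1:ℝ) ≤ (r:ℝ) := by exact_mod_cast hr1
      linarith
    have hs_hi : Real.sqrt ((2*r+1:ℕ):ℝ) ≤ 2 * Real.sqrt r := by
      rw [show 2 * Real.sqrt (r:ℝ) = Real.sqrt 4 * Real.sqrt r by
          rw [show (4:ℝ) = 2^2 by norm_num, Real.sqrt_sq]; norm_num,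
        ← Real.sqrt_mul (by norm_num)]
      apply Real.sqrt_le_sqrt
      rw [hcast]
      have : (1:ℝ) ≤ (r:ℝ) := by exact_mod_cast hr1
      linarith
    have hpow : (2:ℝ)^(2*r+1) = 2 * 4^r := by
      rw [pow_succ, pow_mul]; norm_num; ring
    have h := hT r hr
    have hXnn : (0:ℝ) ≤ ((2*r+1).choose r : ℝ) := by positivity
    have hsnn : (0:ℝ) ≤ Real.sqrt (r:ℝ) := Real.sqrt_nonneg _
    have hcbnn : (0:ℝ) ≤ (Nat.centralBinom r : ℝ) := by positivity
    rw [hpow]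
    constructor
    · calc c1/2 * (2 * 4^r) = c1 * 4^r := by ring
        _ ≤ (Nat.centralBinom r : ℝ) * Real.sqrt r := h.1
        _ ≤ ((2*r+1).choose r : ℝ) * Real.sqrt r := by
            apply mul_le_mul_of_nonneg_right hX1' hsnn
        _ ≤ ((2*r+1).choose r : ℝ) * Real.sqrt ((2*r+1:ℕ):ℝ) := by
            apply mul_le_mul_of_nonneg_left hs_low hXnn
    · calc ((2*r+1).choose r : ℝ) * Real.sqrt ((2*r+1:ℕ):ℝ)
          ≤ (2 * (Nat.centralBinom r : ℝ)) * (2 * Real.sqrt r) := by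
            apply mul_le_mul hX2' hs_hi (Real.sqrt_nonneg _) (by positivity)
        _ = 4 * ((Nat.centralBinom r : ℝ) * Real.sqrt r) := by ring
        _ ≤ 4 * (c2 * 4^r) := by linarith [h.2]
        _ = 2*c2 * (2*4^r) := by ring

end GRaux

/-- Binomial coefficient with an integer lower index, vanishing for negative indices. -/
def chooseZ (n : ℕ) (k : ℤ) : ℕ := if 0 ≤ k then n.choose k.toNat else 0

/-- The gambler's ruin `n`-step transition probability from `ℓ` to `ℓ'`
(symmetric simple random walk absorbed at `0`), by the reflection-principle formula. -/
noncomputable def pGR (n : ℕ) (ℓ ℓ' : ℤ) : ℝ :=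
  ((chooseZ n (((n : ℤ) - ℓ + ℓ') / 2) : ℝ)
    - (chooseZ n (((n : ℤ) - ℓ - ℓ') / 2) : ℝ)) / 2 ^ n

set_option maxHeartbeats 1600000 in
/-- There is a constant `C > 1` such that for all sufficiently large `n` and all
`ℓ, ℓ' ≥ 1` with `n - ℓ + ℓ'` even and `max ℓ ℓ' ≤ n^{1/4}`, the gambler's ruin
transition probability satisfies `C⁻¹ n^{-3/2} ℓ ℓ' ≤ p^{(n)}_{ℓℓ'} ≤ C n^{-3/2} ℓ ℓ'`. -/
theorem gamblers_ruin_polynomial_bounds :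
    ∃ C : ℝ, 1 < C ∧ ∃ N : ℕ, ∀ n : ℕ, N ≤ n → ∀ ℓ ℓ' : ℤ, 1 ≤ ℓ → 1 ≤ ℓ' →
      ((n : ℤ) - ℓ + ℓ') % 2 = 0 → ((max ℓ ℓ' : ℤ) : ℝ) ≤ (n : ℝ) ^ ((1 : ℝ) / 4) →
      C⁻¹ * (n : ℝ) ^ (-(3 : ℝ) / 2) * (ℓ : ℝ) * (ℓ' : ℝ) ≤ pGR n ℓ ℓ'
      ∧ pGR n ℓ ℓ' ≤ C * (n : ℝ) ^ (-(3 : ℝ) / 2) * (ℓ : ℝ) * (ℓ' : ℝ) := by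
  obtain ⟨c3, c4, hc3, hc4, N6, hN6⟩ := middle_bounds
  set C : ℝ := max (4/c3) (2*c4) + 2 with hCdef
  have hCmax : (0:ℝ) ≤ max (4/c3) (2*c4) := le_trans (by positivity) (le_max_left _ _)
  have hC1 : 1 < C := by rw [hCdef]; linarith
  have hC0 : 0 < C := lt_trans one_pos hC1
  have hCinv : C⁻¹ ≤ c3/4 := by
    have h1 : 4/c3 ≤ C := by rw [hCdef]; calc 4/c3 ≤ max (4/c3) (2*c4) := le_max_left _ _
                                             _ ≤ _ := by linarith
    have h2 : (0:ℝ) < 4/c3 := by positivity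
    calc C⁻¹ ≤ (4/c3)⁻¹ := inv_anti₀ h2 h1
      _ = c3/4 := by rw [inv_div]
  have hC2c4 : 2*c4 ≤ C := by
    rw [hCdef]; calc 2*c4 ≤ max (4/c3) (2*c4) := le_max_right _ _
                     _ ≤ _ := by linarith
  refine ⟨C, hC1, max N6 20736, ?_⟩
  intro n hn ℓ ℓ' hℓ hℓ' hpar hmax
  -- basic positivity
  have hn20736 : 20736 ≤ n := le_trans (le_max_right _ _) hn
  have hnN6 : N6 ≤ n + 1 := by have := le_trans (le_max_left _ _) hn; omega
  have hn1 : 1 ≤ n := by omega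
  have Pn : (0:ℝ) < n := by exact_mod_cast (show 0 < n by omega)
  have Pn1 : (0:ℝ) < (n:ℝ) + 1 := by linarith
  have Psn : (0:ℝ) < Real.sqrt n := Real.sqrt_pos.mpr Pn
  have Psn1 : (0:ℝ) < Real.sqrt ((n:ℝ)+1) := Real.sqrt_pos.mpr Pn1
  have P2 : (0:ℝ) < 2^n := by positivity
  -- quarter power facts
  set q : ℝ := (n:ℝ) ^ ((1:ℝ)/4) with hqdef
  have hq14 : 1 ≤ q := by
    rw [hqdef]
    calc (1:ℝ) = 1 ^ ((1:ℝ)/4) := (Real.one_rpow _).symm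
      _ ≤ (n:ℝ) ^ ((1:ℝ)/4) := by
          apply Real.rpow_le_rpow (by norm_num) (by exact_mod_cast hn1) (by norm_num)
  have hq2 : q^2 = Real.sqrt n := by
    have h1 : q^(2:ℕ) = (n:ℝ) ^ ((1:ℝ)/2) := by
      rw [hqdef, ← Real.rpow_natCast ((n:ℝ) ^ ((1:ℝ)/4)) 2, ← Real.rpow_mul (Nat.cast_nonneg n)]
      norm_num
    rw [h1, Real.sqrt_eq_rpow]
  have hq_sqrt : q ≤ Real.sqrt n := by
    calc q = q*1 := (mul_one q).symm
      _ ≤ q*q := mul_le_mul_of_nonneg_left hq14 (by linarith)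
      _ = q^2 := (sq q).symm
      _ = Real.sqrt n := hq2
  have hsqn144 : 144 ≤ Real.sqrt n := by
    rw [show (144:ℝ) = Real.sqrt (144^2) from (Real.sqrt_sq (by norm_num)).symm]
    apply Real.sqrt_le_sqrt
    norm_num
    exact_mod_cast hn20736
  have hsqn_le : Real.sqrt n * 144 ≤ (n:ℝ) := by
    have h := mul_le_mul_of_nonneg_left hsqn144 (Real.sqrt_nonneg (n:ℝ))
    rw [Real.mul_self_sqrt Pn.le] at h
    linarith
  -- bounds on ℓ, ℓ'
  have hl4 : (ℓ:ℝ) ≤ q := by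
    refine le_trans ?_ hmax
    push_cast
    exact le_max_left _ _
  have hl'4 : (ℓ':ℝ) ≤ q := by
    refine le_trans ?_ hmax
    push_cast
    exact le_max_right _ _
  have hlr : (1:ℝ) ≤ (ℓ:ℝ) := by exact_mod_cast hℓ
  have hl'r : (1:ℝ) ≤ (ℓ':ℝ) := by exact_mod_cast hℓ'
  have hsum36 : 2*((ℓ:ℝ) + (ℓ':ℝ)) ≤ (n:ℝ)/36 := by linarith [hq_sqrt, hl4, hl'4, hsqn_le]
  have hLL2 : 2*(ℓ + ℓ') ≤ (n:ℤ) := by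
    have hr : 2*((ℓ:ℝ) + (ℓ':ℝ)) ≤ (n:ℝ) := le_trans hsum36 (by linarith)
    exact_mod_cast hr
  -- integer/nat setup
  have hdvd1 : (2:ℤ) ∣ ((n:ℤ) - ℓ + ℓ') := Int.dvd_of_emod_eq_zero hpar
  have hdvd2 : (2:ℤ) ∣ ((n:ℤ) - ℓ - ℓ') := by
    obtain ⟨c, hc⟩ := hdvd1
    exact ⟨c - ℓ', by omega⟩
  set A : ℤ := ((n:ℤ) - ℓ + ℓ') / 2 with hAdef
  set B : ℤ := ((n:ℤ) - ℓ - ℓ') / 2 with hBdef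
  have h2A : 2 * A = (n:ℤ) - ℓ + ℓ' := Int.mul_ediv_cancel' hdvd1
  have h2B : 2 * B = (n:ℤ) - ℓ - ℓ' := Int.mul_ediv_cancel' hdvd2
  have hA0 : 0 ≤ A := by omega
  have hB0 : 0 ≤ B := by omega
  set a : ℕ := A.toNat with hadef
  set b : ℕ := B.toNat with hbdef
  have haA : (a:ℤ) = A := Int.toNat_of_nonneg hA0
  have hbB : (b:ℤ) = B := Int.toNat_of_nonneg hB0
  set L : ℕ := ℓ.toNat with hLdef
  set L' : ℕ := ℓ'.toNat with hL'def
  have hLl : (L:ℤ) = ℓ := Int.toNat_of_nonneg (by omega)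
  have hL'l : (L':ℤ) = ℓ' := Int.toNat_of_nonneg (by omega)
  have hL1 : 1 ≤ L := by omega
  have hL'1 : 1 ≤ L' := by omega
  have hnat1 : 2*b + L + L' = n := by omega
  have hab : a = b + L' := by omega
  have hba : b ≤ a := by omega
  have han : a ≤ n := by omega
  -- real versions
  have hraB : (a:ℝ) - b = (ℓ':ℝ) := by
    have : (a:ℤ) - b = ℓ' := by omega
    exact_mod_cast this
  have hrnab : (n:ℝ) - a - b = (ℓ:ℝ) := by
    have : (n:ℤ) - a - b = ℓ := by omega
    exact_mod_cast this
  -- pGR unfolding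
  have hchA : chooseZ n A = n.choose a := by rw [chooseZ, if_pos hA0]
  have hchB : chooseZ n B = n.choose b := by rw [chooseZ, if_pos hB0]
  have hpGR0 : pGR n ℓ ℓ' = ((n.choose a : ℝ) - (n.choose b : ℝ)) / 2^n := by
    rw [pGR, ← hAdef, ← hBdef, hchA, hchB]
  -- the sum S
  set m : ℕ := min a (n - a) with hmdef
  have hbm : b ≤ m := by omega
  have h2m : 2*m ≤ n := by omega
  set S : ℝ := ∑ k ∈ Ico b m, (((n+1).choose (k+1) : ℝ) * ((n:ℝ) - 2*k - 1)) with hSdef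
  have htel : ((n:ℝ)+1) * ((n.choose a : ℝ) - (n.choose b : ℝ))
      = ∑ k ∈ Ico b a, (((n+1).choose (k+1) : ℝ) * ((n:ℝ) - 2*k - 1)) := by
    rw [telescope n a b hba, Finset.mul_sum]
    exact Finset.sum_congr rfl (fun k _ => step_id n k)
  have hsum_ma : ∑ k ∈ Ico b a, (((n+1).choose (k+1) : ℝ) * ((n:ℝ) - 2*k - 1)) = S := by
    rcases le_total a (n - a) with hc | hc
    · rw [hSdef, hmdef, min_eq_left hc]
    · rw [hSdef, hmdef, min_eq_right hc]
      have hsplit := Finset.sum_Ico_consecutive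
        (f := fun k => (((n+1).choose (k+1) : ℝ) * ((n:ℝ) - 2*k - 1)))
        (m := b) (n := n - a) (k := a) (by omega) hc
      rw [← hsplit, reflect_zero n a han, add_zero]
  have htelS : ((n:ℝ)+1) * ((n.choose a : ℝ) - (n.choose b : ℝ)) = S := by
    rw [htel, hsum_ma]
  have hpGR_eq : pGR n ℓ ℓ' = S / (((n:ℝ)+1) * 2^n) := by
    rw [hpGR0, eq_div_iff (by positivity)]
    field_simp
    linear_combination htelS
  -- product of ℓ ℓ'
  set x : ℝ := (ℓ:ℝ) * (ℓ':ℝ) with hxdef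
  have hx0 : 0 < x := by rw [hxdef]; exact mul_pos (by linarith) (by linarith)
  have hprod : ((m:ℝ) - b) * ((n:ℝ) - m - b) = x := by
    rcases le_total a (n - a) with hc | hc
    · have hm : m = a := by rw [hmdef, min_eq_left hc]
      rw [hm, hxdef]
      linear_combination ((n:ℝ) - a - b) * hraB + (ℓ':ℝ) * hrnab
    · have hm : m = n - a := by rw [hmdef, min_eq_right hc]
      have hcast : ((n - a : ℕ):ℝ) = (n:ℝ) - a := by
        push_cast [Nat.cast_sub han]; ring
      rw [hm, hcast, hxdef]
      linear_combination ((ℓ:ℝ)) * hraB + ((a:ℝ) - b) * hrnab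
  -- per-term coefficient positivity
  have hcoef : ∀ k ∈ Ico b m, (0:ℝ) ≤ (n:ℝ) - 2*k - 1 := by
    intro k hk
    simp only [Finset.mem_Ico] at hk
    have : 2*k + 2 ≤ n := by omega
    have : (2*(k:ℝ) + 2) ≤ (n:ℝ) := by exact_mod_cast this
    linarith
  -- middle binomial
  set Bm : ℕ := (n+1).choose ((n+1)/2) with hBmdef
  set d : ℕ := L + L' with hddef
  have hd2 : 2 ≤ d := by omega
  have hdM : d ≤ (n+1)/2 := by omega
  have hdN : 16*(d+1)^2 ≤ n+1 := by
    have hdint : (d:ℤ) = ℓ + ℓ' := by omega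
    have hdr : (d:ℝ) = (ℓ:ℝ) + (ℓ':ℝ) := by exact_mod_cast hdint
    have hreal : 16*((d:ℝ)+1)^2 ≤ (n:ℝ)+1 := by
      have hdq : (d:ℝ) ≤ 2*q := by rw [hdr]; linarith
      have hd0 : (0:ℝ) ≤ (d:ℝ) := Nat.cast_nonneg d
      have h1 : ((d:ℝ)+1)^2 ≤ (2*q+1)^2 := by
        apply pow_le_pow_left₀ (by linarith) (by linarith)
      have hfact : (0:ℝ) ≤ (q-1)*(5*q+1) := mul_nonneg (by linarith) (by linarith)
      have h2 : (2*q+1)^2 ≤ 9*q^2 := by linarith [hfact, sq_nonneg q]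
      have h3 : (9:ℝ)*q^2 = 9 * Real.sqrt n := by rw [hq2]
      linarith [hsqn_le]
    have : ((16*(d+1)^2 : ℕ):ℝ) ≤ (((n+1) : ℕ):ℝ) := by push_cast; push_cast at hreal; linarith
    exact_mod_cast this
  -- per-term binomial bounds
  have hup : ∀ k ∈ Ico b m, ((n+1).choose (k+1) : ℝ) ≤ (Bm:ℝ) := by
    intro k hk
    exact_mod_cast Nat.choose_le_middle (k+1) (n+1)
  have hlow : ∀ k ∈ Ico b m, (Bm:ℝ) ≤ 2 * ((n+1).choose (k+1) : ℝ) := by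
    intro k hk
    simp only [Finset.mem_Ico] at hk
    exact choose_ge_half (n+1) ((n+1)/2) d rfl hdM hdN (k+1) (by omega) (by omega)
  -- sum bounds
  have hcsum : ∑ k ∈ Ico b m, ((n:ℝ) - 2*k - 1) = x := by
    rw [coeff_sum n b m hbm, hprod]
  have hShigh : S ≤ (Bm:ℝ) * x := by
    rw [hSdef]
    calc ∑ k ∈ Ico b m, (((n+1).choose (k+1) : ℝ) * ((n:ℝ) - 2*k - 1))
        ≤ ∑ k ∈ Ico b m, ((Bm:ℝ) * ((n:ℝ) - 2*k - 1)) :=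
          Finset.sum_le_sum (fun k hk => mul_le_mul_of_nonneg_right (hup k hk) (hcoef k hk))
      _ = (Bm:ℝ) * ∑ k ∈ Ico b m, ((n:ℝ) - 2*k - 1) := by rw [Finset.mul_sum]
      _ = (Bm:ℝ) * x := by rw [hcsum]
  have hSlow : (Bm:ℝ)/2 * x ≤ S := by
    rw [hSdef]
    calc (Bm:ℝ)/2 * x = ∑ k ∈ Ico b m, ((Bm:ℝ)/2 * ((n:ℝ) - 2*k - 1)) := by
          rw [← Finset.mul_sum, hcsum]
      _ ≤ ∑ k ∈ Ico b m, (((n+1).choose (k+1) : ℝ) * ((n:ℝ) - 2*k - 1)) :=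
          Finset.sum_le_sum (fun k hk =>
            mul_le_mul_of_nonneg_right (by linarith [hlow k hk]) (hcoef k hk))
  -- middle binomial bounds
  have hBb := hN6 (n+1) hnN6
  rw [← hBmdef] at hBb
  have hcastn1 : ((n+1:ℕ):ℝ) = (n:ℝ)+1 := by push_cast; ring
  rw [hcastn1] at hBb
  have hBlow : c3 * 2^(n+1) ≤ (Bm:ℝ) * Real.sqrt ((n:ℝ)+1) := hBb.1
  have hBhigh : (Bm:ℝ) * Real.sqrt ((n:ℝ)+1) ≤ c4 * 2^(n+1) := hBb.2
  -- rpow facts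
  have hR32 : (n:ℝ)^((3:ℝ)/2) = (n:ℝ) * Real.sqrt n := by
    rw [show (3:ℝ)/2 = 1 + 1/2 by norm_num, Real.rpow_add Pn, Real.rpow_one,
      Real.sqrt_eq_rpow]
  set R : ℝ := (n:ℝ) ^ (-(3:ℝ)/2) with hRdef
  have hReq : R * ((n:ℝ) * Real.sqrt n) = 1 := by
    rw [hRdef, show -(3:ℝ)/2 = -((3:ℝ)/2) by norm_num, Real.rpow_neg Pn.le, hR32]
    exact inv_mul_cancel₀ (by positivity)
  have hRpos : 0 < R := by rw [hRdef]; positivity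
  -- comparison of (n+1)^{3/2} with n^{3/2}
  have hsn1_le : Real.sqrt ((n:ℝ)+1) ≤ 2 * Real.sqrt n := by
    rw [show 2 * Real.sqrt (n:ℝ) = Real.sqrt 4 * Real.sqrt n by
        rw [show (4:ℝ) = 2^2 by norm_num, Real.sqrt_sq]; norm_num,
      ← Real.sqrt_mul (by norm_num)]
    apply Real.sqrt_le_sqrt
    linarith
  have hsn_le1 : Real.sqrt n ≤ Real.sqrt ((n:ℝ)+1) := Real.sqrt_le_sqrt (by linarith)
  have h4n : ((n:ℝ)+1) * Real.sqrt ((n:ℝ)+1) ≤ 4 * ((n:ℝ) * Real.sqrt n) := by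
    have h1 : ((n:ℝ)+1) ≤ 2*n := by
      have : (1:ℝ) ≤ (n:ℝ) := by exact_mod_cast hn1
      linarith
    calc ((n:ℝ)+1) * Real.sqrt ((n:ℝ)+1) ≤ (2*n) * (2*Real.sqrt n) :=
          mul_le_mul h1 hsn1_le (Real.sqrt_nonneg _) (by linarith)
      _ = 4 * ((n:ℝ) * Real.sqrt n) := by ring
  have h5n : (n:ℝ) * Real.sqrt n ≤ ((n:ℝ)+1) * Real.sqrt ((n:ℝ)+1) :=
    mul_le_mul (by linarith) hsn_le1 (Real.sqrt_nonneg _) (by linarith)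
  -- key constants
  have hCipos : 0 < C⁻¹ := by positivity
  have hstep : C⁻¹ * R * (((n:ℝ)+1) * Real.sqrt ((n:ℝ)+1)) ≤ c3 := by
    have h1 : C⁻¹ * R * (((n:ℝ)+1) * Real.sqrt ((n:ℝ)+1))
        ≤ C⁻¹ * R * (4 * ((n:ℝ) * Real.sqrt n)) :=
      mul_le_mul_of_nonneg_left h4n (by positivity)
    have h2 : C⁻¹ * R * (4 * ((n:ℝ) * Real.sqrt n)) = 4 * C⁻¹ := by
      linear_combination 4 * C⁻¹ * hReq
    linarith [hCinv]
  have hstep2 : c4 * 2 ≤ C * R * (((n:ℝ)+1) * Real.sqrt ((n:ℝ)+1)) := by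
    have h1 : C * R * ((n:ℝ) * Real.sqrt n) ≤ C * R * (((n:ℝ)+1) * Real.sqrt ((n:ℝ)+1)) :=
      mul_le_mul_of_nonneg_left h5n (by positivity)
    have h2 : C * R * ((n:ℝ) * Real.sqrt n) = C := by
      linear_combination C * hReq
    linarith [hC2c4]
  -- final assembly
  constructor
  · -- lower bound
    rw [hpGR_eq, le_div_iff₀ (by positivity)]
    have keymul : (C⁻¹ * R * (((n:ℝ)+1) * 2^n) * 2) * Real.sqrt ((n:ℝ)+1)
        ≤ (Bm:ℝ) * Real.sqrt ((n:ℝ)+1) := by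
      refine le_trans ?_ hBlow
      have := mul_le_mul_of_nonneg_right hstep (le_of_lt P2)
      calc (C⁻¹ * R * (((n:ℝ)+1) * 2^n) * 2) * Real.sqrt ((n:ℝ)+1)
          = (C⁻¹ * R * (((n:ℝ)+1) * Real.sqrt ((n:ℝ)+1))) * 2^n * 2 := by ring
        _ ≤ c3 * 2^n * 2 := by
            have h := mul_le_mul_of_nonneg_right
              (mul_le_mul_of_nonneg_right hstep (le_of_lt P2)) (by norm_num : (0:ℝ) ≤ 2)
            linarith [h]
        _ = c3 * 2^(n+1) := by rw [pow_succ]; ring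
    have key3 : C⁻¹ * R * (((n:ℝ)+1) * 2^n) * 2 ≤ (Bm:ℝ) :=
      le_of_mul_le_mul_right keymul Psn1
    calc C⁻¹ * R * (ℓ:ℝ) * (ℓ':ℝ) * (((n:ℝ)+1) * 2^n)
        = (C⁻¹ * R * (((n:ℝ)+1) * 2^n) * 2) * (x/2) := by rw [hxdef]; ring
      _ ≤ (Bm:ℝ) * (x/2) := mul_le_mul_of_nonneg_right key3 (by positivity)
      _ = (Bm:ℝ)/2 * x := by ring
      _ ≤ S := hSlow
  · -- upper bound
    rw [hpGR_eq, div_le_iff₀ (by positivity)]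
    have keymul : (Bm:ℝ) * Real.sqrt ((n:ℝ)+1)
        ≤ (C * R * (((n:ℝ)+1) * 2^n)) * Real.sqrt ((n:ℝ)+1) := by
      refine le_trans hBhigh ?_
      calc c4 * 2^(n+1) = (c4 * 2) * 2^n := by rw [pow_succ]; ring
        _ ≤ (C * R * (((n:ℝ)+1) * Real.sqrt ((n:ℝ)+1))) * 2^n :=
            mul_le_mul_of_nonneg_right hstep2 (le_of_lt P2)
        _ = (C * R * (((n:ℝ)+1) * 2^n)) * Real.sqrt ((n:ℝ)+1) := by ring
    have key3 : (Bm:ℝ) ≤ C * R * (((n:ℝ)+1) * 2^n) :=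
      le_of_mul_le_mul_right keymul Psn1
    calc S ≤ (Bm:ℝ) * x := hShigh
      _ ≤ (C * R * (((n:ℝ)+1) * 2^n)) * x := mul_le_mul_of_nonneg_right key3 (le_of_lt hx0)
      _ = C * R * (ℓ:ℝ) * (ℓ':ℝ) * (((n:ℝ)+1) * 2^n) := by rw [hxdef]; ring
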